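/- For λ > −1, t ∈ ℝ and integer m ≥ 2, let P_n be the monic orthogonal polynomials of the generalised higher order Freud weight ω(x;t,λ), with recurrence coefficients β_n and norms h_n = ∫ P_n² ω dx. Define V_n^{(2m)} = (1/h_{n−2}) ∫_{−∞}^{∞} x^{2m−2} P_{n−2}(x) P_n(x) ω(x;t,λ) dx + (β_n/h_n) ∫_{−∞}^{∞} x^{2m−2} P_n(x)² ω(x;t,λ) dx. Then for all n ≥ 1 the discrete string equation holds: 2m V_n^{(2m)} − 2 t β_n = n + (λ + 1/2)(1 − (−1)ⁿ). -/

import Mathlib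

open MeasureTheory Real Polynomial Filter Set Topology

/-- The generalised higher order Freud weight `ω(x;t,λ) = |x|^{2λ+1} exp(t x² − x^{2m})`. -/
noncomputable def freudWeight (m : ℕ) (lam t x : ℝ) : ℝ :=
  |x| ^ (2 * lam + 1) * Real.exp (t * x ^ 2 - x ^ (2 * m))

namespace FreudAux

lemma weight_nonneg (m : ℕ) (lam t x : ℝ) : 0 ≤ freudWeight m lam t x :=
  mul_nonneg (Real.rpow_nonneg (abs_nonneg x) _) (Real.exp_pos _).le

lemma weight_pos (m : ℕ) (lam t : ℝ) {x : ℝ} (hx : x ≠ 0) : 0 < freudWeight m lam t x :=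
  mul_pos (Real.rpow_pos_of_pos (abs_pos.2 hx) _) (Real.exp_pos _)

lemma weight_even (m : ℕ) (lam t x : ℝ) :
    freudWeight m lam t (-x) = freudWeight m lam t x := by
  unfold freudWeight
  rw [abs_neg, neg_sq, Even.neg_pow ⟨m, by ring⟩]

lemma weight_measurable (m : ℕ) (lam t : ℝ) : Measurable (freudWeight m lam t) := by
  unfold freudWeight
  fun_prop

variable {m : ℕ} (hm : 2 ≤ m) {lam : ℝ} (hlam : -1 < lam) (t : ℝ)

include hm in
lemma tendsto_poly_mul_exp (s : ℝ) (p : ℝ[X]) :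
    Tendsto (fun x : ℝ => p.eval x * Real.exp (s * x ^ 2 - x ^ (2 * m))) atTop (𝓝 0) := by
  apply squeeze_zero_norm'
  · filter_upwards [eventually_ge_atTop (max 1 (|s| + 1))] with x hx
    have hx1 : (1 : ℝ) ≤ x := le_trans (le_max_left _ _) hx
    have hxs : |s| + 1 ≤ x := le_trans (le_max_right _ _) hx
    have h4 : x ^ 4 ≤ x ^ (2 * m) := pow_le_pow_right₀ hx1 (by omega)
    have hkey : (0:ℝ) ≤ (x - 1) * x * (x ^ 2 + 1) :=
      mul_nonneg (mul_nonneg (by linarith) (by linarith)) (by positivity)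
    have hs' : s * x ^ 2 ≤ (x - 1) * x ^ 2 :=
      mul_le_mul_of_nonneg_right (by linarith [le_abs_self s]) (sq_nonneg x)
    have hexp : s * x ^ 2 - x ^ (2 * m) ≤ -x := by nlinarith
    have hx0 : (0:ℝ) < x := lt_of_lt_of_le one_pos hx1
    calc ‖p.eval x * Real.exp (s * x ^ 2 - x ^ (2 * m))‖
        = |p.eval x| * Real.exp (s * x ^ 2 - x ^ (2 * m)) := by
          rw [norm_mul, Real.norm_eq_abs, Real.norm_eq_abs, abs_of_pos (Real.exp_pos _)]
      _ ≤ |p.eval x| * Real.exp (-x) :=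
          mul_le_mul_of_nonneg_left (Real.exp_le_exp.2 hexp) (abs_nonneg _)
      _ = |p.eval x / Real.exp x| := by
          rw [abs_div, abs_of_pos (Real.exp_pos x), Real.exp_neg, div_eq_mul_inv]
  · have := (p.tendsto_div_exp_atTop).abs
    simpa using this

include hm in
lemma exists_bound_poly_exp (s : ℝ) (p : ℝ[X]) :
    ∃ C : ℝ, ∀ x : ℝ, |p.eval x| * Real.exp (s * x ^ 2 - x ^ (2 * m)) ≤ C := by
  set φ : ℝ → ℝ := fun x => |p.eval x| * Real.exp (s * x ^ 2 - x ^ (2 * m)) with hφ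
  have hcont : Continuous φ := by
    apply Continuous.mul (p.continuous.abs)
    exact Real.continuous_exp.comp (((continuous_const.mul (continuous_pow 2)).sub
      (continuous_pow (2 * m))))
  have htop : Tendsto φ atTop (𝓝 0) := by
    have := (tendsto_poly_mul_exp hm s p).abs
    simp only [abs_zero] at this
    apply this.congr
    intro x
    rw [abs_mul, abs_of_pos (Real.exp_pos _)]
  have hbot : Tendsto φ atBot (𝓝 0) := by
    have h2 : Tendsto (fun x : ℝ => φ (-x)) atTop (𝓝 0) := by
      have := (tendsto_poly_mul_exp hm s (p.comp (-X))).abs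
      simp only [abs_zero] at this
      apply this.congr
      intro x
      rw [abs_mul, abs_of_pos (Real.exp_pos _)]
      show _ = |eval (-x) p| * rexp (s * (-x) ^ 2 - (-x) ^ (2 * m))
      rw [Even.neg_pow (⟨m, two_mul m⟩ : Even (2*m)), neg_sq]
      simp [eval_comp]
    have h3 : Tendsto (fun x : ℝ => -x) atBot (atTop : Filter ℝ) := tendsto_neg_atBot_atTop
    exact (h2.comp h3).congr (fun x => by simp)
  obtain ⟨A, hA⟩ := (htop.eventually_le_const (by norm_num : (0:ℝ) < 1)).exists_forall_of_atTop
  obtain ⟨B, hB⟩ := (hbot.eventually_le_const (by norm_num : (0:ℝ) < 1)).exists_forall_of_atBot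
  obtain ⟨C, hC⟩ := (isCompact_Icc : IsCompact (Icc B A)).exists_bound_of_continuousOn
    hcont.continuousOn
  refine ⟨max C 1, fun x => ?_⟩
  by_cases h1 : A ≤ x
  · exact le_trans (hA x h1) (le_max_right _ _)
  by_cases h2 : x ≤ B
  · exact le_trans (hB x h2) (le_max_right _ _)
  have hx : x ∈ Icc B A := ⟨le_of_not_ge h2, le_of_not_ge h1⟩
  exact le_trans (le_trans (le_abs_self _) (hC x hx)) (le_max_left _ _)

lemma integrable_abs_rpow_exp {s : ℝ} (hs : -1 < s) :
    Integrable (fun x : ℝ => |x| ^ s * Real.exp (-x ^ 2)) := by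
  have h1 : IntegrableOn (fun x : ℝ => |x| ^ s * Real.exp (-x ^ 2)) (Ioi 0) := by
    apply (integrableOn_rpow_mul_exp_neg_mul_sq one_pos hs).congr_fun ?_ measurableSet_Ioi
    intro x hx
    simp only []
    rw [abs_of_pos hx, neg_one_mul]
  have h2 : IntegrableOn (fun x : ℝ => |x| ^ s * Real.exp (-x ^ 2)) (Iic 0) := by
    rw [← (Measure.measurePreserving_neg (volume : Measure ℝ)).integrableOn_comp_preimage
      (Homeomorph.neg ℝ).measurableEmbedding]
    have : (Neg.neg ⁻¹' (Iic (0:ℝ))) = Ici 0 := by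
      ext x; simp
    rw [this, integrableOn_Ici_iff_integrableOn_Ioi]
    apply h1.congr_fun ?_ measurableSet_Ioi
    intro x _
    simp [Function.comp, neg_sq]
  rw [← integrableOn_univ, ← Iic_union_Ioi (a := (0:ℝ))]
  exact h2.union h1

include hm hlam in
lemma integrable_poly_weight (p : ℝ[X]) :
    Integrable (fun x => p.eval x * freudWeight m lam t x) := by
  obtain ⟨C, hC⟩ := exists_bound_poly_exp hm (t + 1) p
  have hg : Integrable (fun x : ℝ => C * (|x| ^ (2 * lam + 1) * Real.exp (-x ^ 2))) :=
    (integrable_abs_rpow_exp (by linarith)).const_mul C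
  apply Integrable.mono' hg
  · exact (p.continuous.measurable.mul (weight_measurable m lam t)).aestronglyMeasurable
  · filter_upwards with x
    have hsplit : Real.exp (t * x ^ 2 - x ^ (2 * m))
        = Real.exp ((t + 1) * x ^ 2 - x ^ (2 * m)) * Real.exp (-x ^ 2) := by
      rw [← Real.exp_add]; ring_nf
    have h1 : ‖p.eval x * freudWeight m lam t x‖
        = |x| ^ (2 * lam + 1) * (|p.eval x| * Real.exp ((t + 1) * x ^ 2 - x ^ (2 * m)))
          * Real.exp (-x ^ 2) := by
      rw [norm_mul, Real.norm_eq_abs, Real.norm_eq_abs,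
        abs_of_nonneg (weight_nonneg m lam t x)]
      unfold freudWeight
      rw [hsplit]; ring
    rw [h1]
    have h2 : |x| ^ (2 * lam + 1) * (|p.eval x| * Real.exp ((t + 1) * x ^ 2 - x ^ (2 * m)))
          * Real.exp (-x ^ 2) ≤ |x| ^ (2 * lam + 1) * C * Real.exp (-x ^ 2) := by
      apply mul_le_mul_of_nonneg_right _ (Real.exp_pos _).le
      exact mul_le_mul_of_nonneg_left (hC x) (Real.rpow_nonneg (abs_nonneg x) _)
    calc _ ≤ |x| ^ (2 * lam + 1) * C * Real.exp (-x ^ 2) := h2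
      _ = C * (|x| ^ (2 * lam + 1) * Real.exp (-x ^ 2)) := by ring

end FreudAux

/-- The linear functional `p ↦ ∫ p ω`. -/
noncomputable def freudJ (m : ℕ) (lam t : ℝ) (p : Polynomial ℝ) : ℝ :=
  ∫ x : ℝ, p.eval x * freudWeight m lam t x

namespace FreudAux
variable {m : ℕ} (hm : 2 ≤ m) {lam : ℝ} (hlam : -1 < lam) (t : ℝ)

include hm hlam

lemma J_add (p q : ℝ[X]) :
    freudJ m lam t (p + q) = freudJ m lam t p + freudJ m lam t q := by
  unfold freudJ
  rw [← integral_add (integrable_poly_weight hm hlam t p) (integrable_poly_weight hm hlam t q)]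
  congr 1; funext x; simp [add_mul]

omit hm hlam in
lemma J_Cmul (a : ℝ) (p : ℝ[X]) :
    freudJ m lam t (Polynomial.C a * p) = a * freudJ m lam t p := by
  unfold freudJ
  rw [← integral_const_mul]
  congr 1; funext x; simp [mul_assoc]

lemma J_sub (p q : ℝ[X]) :
    freudJ m lam t (p - q) = freudJ m lam t p - freudJ m lam t q := by
  have h := J_add hm hlam t (p - q) q
  simp only [sub_add_cancel] at h
  linarith

omit hm hlam in
lemma J_odd (p : ℝ[X]) (h : ∀ x : ℝ, p.eval (-x) = - p.eval x) :
    freudJ m lam t p = 0 := by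
  unfold freudJ
  set f : ℝ → ℝ := fun x => p.eval x * freudWeight m lam t x with hf
  have hodd : ∀ x, f (-x) = - f x := by
    intro x
    rw [hf]; simp only []
    rw [h x, weight_even, neg_mul]
  have h1 : ∫ x in Iic (0:ℝ), f x = - ∫ x in Ioi (0:ℝ), f x := by
    have e1 : ∫ x in Iic (0:ℝ), f (-x) = ∫ x in Ioi (-(0:ℝ)), f x := integral_comp_neg_Iic 0 f
    have e2 : ∫ x in Iic (0:ℝ), f (-x) = ∫ x in Iic (0:ℝ), -f x := by
      congr 1; funext x; rw [hodd]
    rw [integral_neg] at e2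
    rw [neg_zero] at e1
    linarith
  by_cases hint : Integrable f
  · rw [← intervalIntegral.integral_Iic_add_Ioi (b := (0:ℝ)) hint.integrableOn hint.integrableOn, h1]
    ring
  · rw [integral_undef hint]
include hm hlam in
lemma J_string (Q R : ℝ[X]) (hQR : Q = X * R)
    (hodd : ∀ x : ℝ, Q.eval (-x) = - Q.eval x) :
    freudJ m lam t (derivative Q + C (2*t) * (X * Q) - C (2*(m:ℝ)) * (X ^ (2*m-1) * Q)
      + C (2*lam+1) * R) = 0 := by
  set S : ℝ[X] := derivative Q + C (2*t) * (X * Q) - C (2*(m:ℝ)) * (X ^ (2*m-1) * Q)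
      + C (2*lam+1) * R with hS
  set G : ℝ → ℝ := fun x => S.eval x * freudWeight m lam t x with hG
  have hQev : ∀ x : ℝ, Q.eval x = x * R.eval x := by
    intro x; rw [hQR]; simp
  -- parity facts
  have hReven : ∀ x : ℝ, R.eval (-x) = R.eval x := by
    intro x
    rcases eq_or_ne x 0 with rfl | hx
    · norm_num
    · have h1 : (-x) * R.eval (-x) = (-x) * R.eval x := by
        rw [← hQev, hodd, hQev]; ring
      exact mul_left_cancel₀ (neg_ne_zero.2 hx) h1
  have hQcomp : Q.comp (-X) = -Q := by
    apply Polynomial.funext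
    intro x
    simp [eval_comp, hodd]
  have hQ'comp : (derivative Q).comp (-X) = derivative Q := by
    have h1 : derivative (Q.comp (-X)) = derivative (-X) * (derivative Q).comp (-X) :=
      derivative_comp Q (-X)
    rw [hQcomp, derivative_neg, derivative_neg, derivative_X, neg_one_mul] at h1
    exact (neg_injective h1).symm
  have hQ'even : ∀ x : ℝ, (derivative Q).eval (-x) = (derivative Q).eval x := by
    intro x
    conv_lhs => rw [← hQ'comp]
    simp [eval_comp]
  have hoddpow : Odd (2*m-1) := ⟨m-1, by omega⟩
  have hGeven : ∀ x : ℝ, G (-x) = G x := by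
    intro x
    rw [hG]; simp only []
    rw [weight_even]
    congr 1
    rw [hS]
    simp only [eval_add, eval_sub, eval_mul, eval_C, eval_X, eval_pow]
    rw [hQ'even, hodd, hReven, hoddpow.neg_pow]
    ring
  have hQ0 : Q.eval 0 = 0 := by
    have := hodd 0
    rw [neg_zero] at this
    linarith
  set F : ℝ → ℝ := fun x => Q.eval x * freudWeight m lam t x with hF
  have hSint : Integrable G := integrable_poly_weight hm hlam t S
  have hIoi : ∫ x in Ioi (0:ℝ), G x = 0 := by
    have hF0 : F 0 = 0 := by rw [hF]; simp [hQ0]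
    have habs : ∀ x : ℝ, ‖F x‖
        = |R.eval x| * (|x| ^ (2*lam+2) * Real.exp (t*x^2 - x^(2*m))) := by
      intro x
      rw [hF]; simp only []
      rw [norm_mul, Real.norm_eq_abs, Real.norm_eq_abs,
        abs_of_nonneg (weight_nonneg m lam t x)]
      unfold freudWeight
      have e1 : |Q.eval x| = |x| * |R.eval x| := by rw [hQev]; rw [abs_mul]
      have e2 : |x| * |x| ^ (2*lam+1) = |x| ^ (2*lam+2) := by
        rcases eq_or_ne x 0 with rfl | hx
        · rw [abs_zero, zero_mul, Real.zero_rpow (by linarith)]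
        · have h2 : |x| ^ (2*lam+2) = |x| ^ (2*lam+1) * |x| := by
            have e : (2*lam+2 : ℝ) = (2*lam+1) + 1 := by ring
            rw [e, Real.rpow_add_one (abs_ne_zero.2 hx)]
          rw [h2, mul_comm]
      rw [e1]
      rw [← e2]
      ring
    have hcont : ContinuousWithinAt F (Ici (0:ℝ)) 0 := by
      have hg : ContinuousAt (fun x : ℝ =>
          |R.eval x| * (|x| ^ (2*lam+2) * Real.exp (t*x^2 - x^(2*m)))) 0 := by
        apply ContinuousAt.mul
        · exact (R.continuous.abs).continuousAt
        apply ContinuousAt.mul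
        · exact (continuous_abs.continuousAt).rpow_const (Or.inr (by linarith))
        · exact (Real.continuous_exp.comp ((continuous_const.mul (continuous_pow 2)).sub
            (continuous_pow (2*m)))).continuousAt
      have hg0 : |R.eval (0:ℝ)| * (|(0:ℝ)| ^ (2*lam+2) * Real.exp (t*0^2 - 0^(2*m))) = 0 := by
        rw [abs_zero, Real.zero_rpow (by linarith)]
        ring
      have hgt : Tendsto (fun x : ℝ =>
          |R.eval x| * (|x| ^ (2*lam+2) * Real.exp (t*x^2 - x^(2*m)))) (𝓝[Ici 0] 0) (𝓝 0) := by
        have := hg.tendsto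
        rw [hg0] at this
        exact this.mono_left nhdsWithin_le_nhds
      unfold ContinuousWithinAt
      rw [hF0]
      exact squeeze_zero_norm (fun x => (habs x).le) hgt
    have hderiv : ∀ x ∈ Ioi (0:ℝ), HasDerivAt F (G x) x := by
      intro x hx
      have hx0 : (0:ℝ) < x := hx
      have h1 : HasDerivAt (fun y : ℝ => Q.eval y) ((derivative Q).eval x) x := Q.hasDerivAt x
      have h2 : HasDerivAt (fun y : ℝ => y ^ (2*lam+1)) ((2*lam+1) * x ^ (2*lam+1-1)) x :=
        Real.hasDerivAt_rpow_const (Or.inl hx0.ne')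
      have hb : HasDerivAt (fun y : ℝ => y^(2*m)) (2*(m:ℝ) * x^(2*m-1)) x := by
        have := hasDerivAt_pow (2*m) x
        refine this.congr_deriv ?_
        push_cast
        ring
      have ha : HasDerivAt (fun y : ℝ => y^2) (2*x) x := by
        simpa using hasDerivAt_pow 2 x
      have h3 : HasDerivAt (fun y : ℝ => t * y^2 - y^(2*m))
          (t * (2*x) - 2*(m:ℝ) * x^(2*m-1)) x := (ha.const_mul t).sub hb
      have h4 := h3.exp
      have hW := h1.mul (h2.mul h4)
      have hFW : F =ᶠ[𝓝 x]
          (fun y => Q.eval y * (y ^ (2*lam+1) * Real.exp (t*y^2 - y^(2*m)))) := by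
        filter_upwards [Ioi_mem_nhds hx0] with y hy
        rw [hF]; simp only []
        unfold freudWeight
        rw [abs_of_pos hy]
      have hD := hW.congr_of_eventuallyEq hFW
      have e3 : x ^ (2*lam+1-1) * x = x ^ (2*lam+1) := by
        rw [← Real.rpow_add_one hx0.ne' (2*lam+1-1)]
        norm_num
      simp only [Pi.mul_apply] at hD
      refine hD.congr_deriv (Eq.symm ?_)
      rw [hG, hS]; simp only [eval_add, eval_sub, eval_mul, eval_C, eval_X, eval_pow]
      unfold freudWeight
      rw [abs_of_pos hx0, hQev, ← e3]
      ring
    have htop : Tendsto F atTop (𝓝 0) := by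
      set k : ℕ := ⌈2*lam+1⌉₊ with hk
      have hgten : Tendsto (fun x : ℝ => |eval x (Q * X^k) * Real.exp (t*x^2 - x^(2*m))|)
          atTop (𝓝 0) := by
        have := (tendsto_poly_mul_exp hm t (Q * X^k)).abs
        simpa using this
      apply squeeze_zero_norm' ?_ hgten
      filter_upwards [eventually_ge_atTop (1:ℝ)] with x hx1
      have hx0 : (0:ℝ) < x := lt_of_lt_of_le one_pos hx1
      have e1 : ‖F x‖ = |Q.eval x| * (x ^ (2*lam+1) * Real.exp (t*x^2 - x^(2*m))) := by
        rw [hF]; simp only []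
        rw [norm_mul, Real.norm_eq_abs, Real.norm_eq_abs,
          abs_of_nonneg (weight_nonneg m lam t x)]
        unfold freudWeight
        rw [abs_of_pos hx0]
      have e2 : x ^ (2*lam+1) ≤ x ^ (k:ℕ) := by
        calc x ^ (2*lam+1) ≤ x ^ ((k:ℕ):ℝ) :=
              Real.rpow_le_rpow_of_exponent_le hx1 (Nat.le_ceil _)
          _ = x ^ (k:ℕ) := Real.rpow_natCast x k
      calc ‖F x‖ = |Q.eval x| * (x ^ (2*lam+1) * Real.exp (t*x^2 - x^(2*m))) := e1
        _ ≤ |Q.eval x| * (x ^ (k:ℕ) * Real.exp (t*x^2 - x^(2*m))) := by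
            apply mul_le_mul_of_nonneg_left _ (abs_nonneg _)
            exact mul_le_mul_of_nonneg_right e2 (Real.exp_pos _).le
        _ = |eval x (Q * X^k) * Real.exp (t*x^2 - x^(2*m))| := by
            rw [abs_mul, abs_of_pos (Real.exp_pos _), eval_mul, eval_pow, eval_X, abs_mul,
              abs_of_pos (pow_pos hx0 k)]
            ring
    have := integral_Ioi_of_hasDerivAt_of_tendsto hcont hderiv hSint.integrableOn htop
    rw [hF0, sub_zero] at this
    exact this
  have hIic : ∫ x in Iic (0:ℝ), G x = ∫ x in Ioi (0:ℝ), G x := by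
    have e1 : ∫ x in Iic (0:ℝ), G (-x) = ∫ x in Ioi (-(0:ℝ)), G x := integral_comp_neg_Iic 0 G
    rw [neg_zero] at e1
    have e2 : ∫ x in Iic (0:ℝ), G (-x) = ∫ x in Iic (0:ℝ), G x := by
      congr 1; funext x; rw [hGeven]
    linarith
  have hJG : freudJ m lam t S = ∫ x, G x := rfl
  rw [hJG, ← intervalIntegral.integral_Iic_add_Ioi (b := (0:ℝ)) hSint.integrableOn
    hSint.integrableOn, hIic, hIoi, add_zero]

end FreudAux

/-- For `λ > −1`, `t ∈ ℝ` and integer `m ≥ 2`, with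
`V_n^{(2m)} = (1/h_{n−2}) ∫ x^{2m−2} P_{n−2} P_n ω dx + (β_n/h_n) ∫ x^{2m−2} P_n² ω dx`,
the recurrence coefficients of the monic orthogonal polynomials of the generalised higher
order Freud weight satisfy the discrete string equation
`2m V_n^{(2m)} − 2t β_n = n + (λ + 1/2)(1 − (−1)ⁿ)` for all `n ≥ 1`. -/
theorem discrete_string_equation (m : ℕ) (hm : 2 ≤ m) (lam t : ℝ) (hlam : -1 < lam)
    (P : ℕ → Polynomial ℝ) (β : ℕ → ℝ) (h : ℕ → ℝ)
    (hmonic : ∀ n, (P n).Monic) (hdeg : ∀ n, (P n).natDegree = n)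
    (horth : ∀ j k, j ≠ k →
      ∫ x : ℝ, (P j).eval x * (P k).eval x * freudWeight m lam t x = 0)
    (hβpos : ∀ n, 1 ≤ n → 0 < β n)
    (hP0 : P 0 = 1) (hP1 : P 1 = X)
    (hrec : ∀ n, 1 ≤ n → P (n + 1) = X * P n - C (β n) * P (n - 1))
    (hh : ∀ n, h n = ∫ x : ℝ, ((P n).eval x) ^ 2 * freudWeight m lam t x) :
    ∀ n : ℕ, 1 ≤ n →
      2 * (m : ℝ) *
          ((1 / h (n - 2)) *
              (∫ x : ℝ, x ^ (2 * m - 2) * ((P (n - 2)).eval x * (P n).eval x) *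
                freudWeight m lam t x) +
            (β n / h n) *
              (∫ x : ℝ, x ^ (2 * m - 2) * ((P n).eval x) ^ 2 * freudWeight m lam t x))
        - 2 * t * β n = (n : ℝ) + (lam + 1 / 2) * (1 - (-1 : ℝ) ^ n) := by
  have Jadd := FreudAux.J_add hm hlam t
  have Jsub := FreudAux.J_sub hm hlam t
  have JC := FreudAux.J_Cmul (m := m) (lam := lam) t
  -- orthogonality in J form
  have horthJ : ∀ j k : ℕ, j ≠ k → freudJ m lam t (P j * P k) = 0 := by
    intro j k hjk
    have h0 := horth j k hjk
    unfold freudJ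
    simpa [eval_mul] using h0
  have hhJ : ∀ k, h k = freudJ m lam t (P k ^ 2) := by
    intro k
    rw [hh k]
    unfold freudJ
    simp [eval_pow]
  -- parity of P
  have hPodd : ∀ k, ∀ x : ℝ, (P k).eval (-x) = (-1:ℝ)^k * (P k).eval x := by
    intro k
    induction k using Nat.strong_induction_on with
    | _ k ih =>
      rcases k with _ | _ | j
      · intro x; simp [hP0]
      · intro x; simp [hP1]
      · intro x
        have hr := hrec (j+1) (by omega)
        rw [show j+2 = (j+1)+1 from rfl, hr]
        simp only [eval_sub, eval_mul, eval_X, eval_C, Nat.add_sub_cancel]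
        rw [ih (j+1) (by omega), ih j (by omega)]
        ring
  -- orthogonality to lower degree polynomials
  have horthlow : ∀ (N : ℕ) (q : ℝ[X]), q.degree < (N:ℕ) → freudJ m lam t (q * P N) = 0 := by
    have key : ∀ (d : ℕ) (N : ℕ) (q : ℝ[X]), q.natDegree ≤ d → q.degree < (N:ℕ) →
        freudJ m lam t (q * P N) = 0 := by
      intro d
      induction d with
      | zero =>
        intro N q hq0 hqN
        have hq : q = C (q.coeff 0) := eq_C_of_natDegree_le_zero hq0
        rcases eq_or_ne q 0 with rfl | hqz
        · unfold freudJ; simp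
        · have hc0 : q.coeff 0 ≠ 0 := by
            intro hz
            apply hqz
            rw [hq, hz, map_zero]
          have hdeg0 : q.degree = 0 := by rw [hq]; exact degree_C hc0
          have hN : (0:ℕ) < N := by
            rw [hdeg0] at hqN
            exact_mod_cast hqN
          have hJN : freudJ m lam t (P N) = 0 := by
            have h0 := horthJ 0 N (by omega)
            rwa [hP0, one_mul] at h0
          rw [hq, JC, hJN, mul_zero]
      | succ d ih =>
        intro N q hq hqN
        by_cases hd : q.natDegree ≤ d
        · exact ih N q hd hqN
        have hqd : q.natDegree = d+1 := le_antisymm hq (by omega)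
        have hq0 : q ≠ 0 := by
          intro hz
          rw [hz, natDegree_zero] at hqd
          omega
        have hNd : d+1 < N := by
          rw [degree_eq_natDegree hq0, hqd] at hqN
          exact_mod_cast hqN
        have hPd : (P (d+1)).coeff (d+1) = 1 := by
          have h1 := (hmonic (d+1)).coeff_natDegree
          rwa [hdeg (d+1)] at h1
        have hrd : (q - C (q.coeff (d+1)) * P (d+1)).natDegree ≤ d := by
          rw [natDegree_le_iff_coeff_eq_zero]
          intro k hk
          rw [coeff_sub, coeff_C_mul]
          rcases eq_or_lt_of_le (Nat.succ_le_of_lt hk) with he | hlt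
          · rw [← he, hPd, mul_one, sub_self]
          · rw [coeff_eq_zero_of_natDegree_lt (show q.natDegree < k by omega),
              coeff_eq_zero_of_natDegree_lt
                (show (P (d+1)).natDegree < k by rw [hdeg (d+1)]; omega)]
            simp
        have hrdeg : (q - C (q.coeff (d+1)) * P (d+1)).degree < (N:ℕ) := by
          calc (q - C (q.coeff (d+1)) * P (d+1)).degree
              ≤ ((q - C (q.coeff (d+1)) * P (d+1)).natDegree : WithBot ℕ) := degree_le_natDegree
            _ ≤ ((d:ℕ) : WithBot ℕ) := by exact_mod_cast hrd
            _ < ((N:ℕ) : WithBot ℕ) := by exact_mod_cast (by omega : d < N)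
        have hsplit : q * P N = (q - C (q.coeff (d+1)) * P (d+1)) * P N
            + C (q.coeff (d+1)) * (P (d+1) * P N) := by ring
        rw [hsplit, Jadd, JC, ih N _ hrd hrdeg, horthJ (d+1) N (by omega), mul_zero, add_zero]
    intro N q hq
    exact key q.natDegree N q le_rfl hq
  -- positivity of norms
  have hhpos : ∀ k, 0 < h k := by
    intro k
    rw [hh k]
    have hnn : 0 ≤ (fun x => ((P k).eval x)^2 * freudWeight m lam t x) := by
      intro x
      exact mul_nonneg (sq_nonneg _) (FreudAux.weight_nonneg m lam t x)
    have hint : Integrable (fun x => ((P k).eval x)^2 * freudWeight m lam t x) := by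
      have h0 := FreudAux.integrable_poly_weight hm hlam t ((P k)^2)
      simpa [eval_pow] using h0
    apply (integral_pos_iff_support_of_nonneg hnn hint).2
    have hsfin : ({x : ℝ | (P k).IsRoot x} ∪ {0}).Finite :=
      (finite_setOf_isRoot (hmonic k).ne_zero).union (finite_singleton 0)
    have hsub : ({x : ℝ | (P k).IsRoot x} ∪ {0})ᶜ
        ⊆ Function.support (fun x => ((P k).eval x)^2 * freudWeight m lam t x) := by
      intro x hx
      simp only [mem_compl_iff, mem_union, mem_setOf_eq, mem_singleton_iff, not_or] at hx
      obtain ⟨hroot, hzero⟩ := hx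
      apply ne_of_gt
      have hne : (P k).eval x ≠ 0 := hroot
      have hsq : 0 < ((P k).eval x)^2 := by positivity
      exact mul_pos hsq (FreudAux.weight_pos m lam t hzero)
    have hμc : 0 < volume ({x : ℝ | (P k).IsRoot x} ∪ {0})ᶜ := by
      rw [pos_iff_ne_zero]
      intro h0
      have hle : volume (univ : Set ℝ)
          ≤ volume ({x : ℝ | (P k).IsRoot x} ∪ {0})
            + volume ({x : ℝ | (P k).IsRoot x} ∪ {0})ᶜ := by
        rw [← union_compl_self ({x : ℝ | (P k).IsRoot x} ∪ {0})]
        exact measure_union_le _ _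
      rw [Real.volume_univ, hsfin.measure_zero, h0, add_zero] at hle
      simp at hle
    exact lt_of_lt_of_le hμc (measure_mono hsub)
  -- norm recurrence
  have hβh : ∀ k, 1 ≤ k → h k = β k * h (k-1) := by
    intro k hk
    have hmX : ((X:ℝ[X]) * P (k-1)).Monic := monic_X.mul (hmonic (k-1))
    have hndX : ((X:ℝ[X]) * P (k-1)).natDegree = k := by
      rw [natDegree_mul X_ne_zero (hmonic (k-1)).ne_zero, natDegree_X, hdeg (k-1)]
      omega
    have hsubd : (P k - X * P (k-1)).degree < ((k : ℕ) : WithBot ℕ) := by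
      have h1 : (P k).degree = ((k:ℕ) : WithBot ℕ) := by
        rw [degree_eq_natDegree (hmonic k).ne_zero, hdeg k]
      have h2 : ((X:ℝ[X]) * P (k-1)).degree = ((k:ℕ) : WithBot ℕ) := by
        rw [degree_eq_natDegree hmX.ne_zero, hndX]
      have h3 := degree_sub_lt (h1.trans h2.symm) (hmonic k).ne_zero
        (by rw [(hmonic k).leadingCoeff, hmX.leadingCoeff])
      rwa [h1] at h3
    have e0 : freudJ m lam t (P k * P k) = freudJ m lam t ((X * P (k-1)) * P k) := by
      have h0 := horthlow k (P k - X * P (k-1)) hsubd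
      have hsplit : (P k - X * P (k-1)) * P k = P k * P k - (X * P (k-1)) * P k := by ring
      rw [hsplit, Jsub] at h0
      linarith
    have e1 : (X : ℝ[X]) * P k = P (k+1) + C (β k) * P (k-1) := by
      rw [hrec k hk]; ring
    have e2 : ((X:ℝ[X]) * P (k-1)) * P k
        = P (k+1) * P (k-1) + C (β k) * (P (k-1) * P (k-1)) := by
      calc ((X:ℝ[X]) * P (k-1)) * P k = (X * P k) * P (k-1) := by ring
        _ = (P (k+1) + C (β k) * P (k-1)) * P (k-1) := by rw [e1]
        _ = _ := by ring
    calc h k = freudJ m lam t (P k * P k) := by rw [hhJ k, pow_two]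
      _ = freudJ m lam t ((X * P (k-1)) * P k) := e0
      _ = freudJ m lam t (P (k+1) * P (k-1))
          + β k * freudJ m lam t (P (k-1) * P (k-1)) := by rw [e2, Jadd, JC]
      _ = β k * h (k-1) := by
          rw [horthJ (k+1) (k-1) (by omega), hhJ (k-1), pow_two, zero_add]
  -- evaluation at zero
  have hPzero : ∀ j, Odd j → (P j).eval 0 = 0 := by
    intro j hj
    have h0 := hPodd j 0
    rw [neg_zero, hj.neg_one_pow] at h0
    linarith
  have hXdiv : ∀ j, 1 ≤ j → (X : ℝ[X]) * divX (P j * P (j-1)) = P j * P (j-1) := by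
    intro j hj
    have hc0 : (P j * P (j-1)).coeff 0 = 0 := by
      rw [coeff_zero_eq_eval_zero, eval_mul]
      rcases Nat.even_or_odd j with hev | hod
      · have hodd1 : Odd (j-1) := by
          rcases hev with ⟨r, hr⟩
          exact ⟨r-1, by omega⟩
        rw [hPzero (j-1) hodd1, mul_zero]
      · rw [hPzero j hod, zero_mul]
    have h0 := X_mul_divX_add (P j * P (j-1))
    rwa [hc0, map_zero, add_zero] at h0
  -- the auxiliary integrals I_k
  have hI : ∀ k, 1 ≤ k →
      freudJ m lam t (divX (P k * P (k-1))) = if Odd k then h (k-1) else 0 := by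
    intro k hk
    induction k, hk using Nat.le_induction with
    | base =>
      have hX1 : P 1 * P (1-1) = (X:ℝ[X]) := by
        norm_num [hP1, hP0]
      rw [hX1]
      have hdX : divX (X : ℝ[X]) = 1 := by
        have h2 := X_mul_divX_add (X : ℝ[X])
        rw [coeff_X_zero, map_zero, add_zero] at h2
        exact mul_left_cancel₀ (X_ne_zero (R := ℝ)) (h2.trans (mul_one X).symm)
      rw [hdX, if_pos odd_one]
      rw [hhJ 0, hP0, one_pow]
    | succ k hk1 ih =>
      have hkey : (X:ℝ[X]) * divX (P (k+1) * P (k+1-1))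
          = X * ((P k)^2 - C (β k) * divX (P k * P (k-1))) := by
        rw [hXdiv (k+1) (by omega)]
        simp only [Nat.add_sub_cancel]
        rw [hrec k hk1]
        calc (X * P k - C (β k) * P (k-1)) * P k
            = X * (P k)^2 - C (β k) * (P k * P (k-1)) := by ring
          _ = X * (P k)^2 - C (β k) * (X * divX (P k * P (k-1))) := by rw [hXdiv k hk1]
          _ = _ := by ring
      have hrdx : divX (P (k+1) * P (k+1-1)) = (P k)^2 - C (β k) * divX (P k * P (k-1)) :=
        mul_left_cancel₀ X_ne_zero hkey
      simp only [Nat.add_sub_cancel] at hrdx ⊢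
      rw [hrdx, Jsub, JC, ← hhJ k, ih]
      rcases Nat.even_or_odd k with hev | hod
      · rw [if_neg (by simpa using hev), if_pos hev.add_one]
        ring
      · rw [if_pos hod, if_neg (by simpa using hod.add_one)]
        rw [hβh k hk1]
        ring
  -- main computation
  intro n hn
  have hoddpow : Odd (2*m-1) := ⟨m-1, by omega⟩
  have hQodd : ∀ x : ℝ, (P n * P (n-1)).eval (-x) = -(P n * P (n-1)).eval x := by
    intro x
    simp only [eval_mul]
    rw [hPodd n x, hPodd (n-1) x]
    have hsign : (-1:ℝ)^n * (-1:ℝ)^(n-1) = -1 := by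
      rw [← pow_add]
      exact Odd.neg_one_pow ⟨n-1, by omega⟩
    calc ((-1:ℝ)^n * (P n).eval x) * ((-1:ℝ)^(n-1) * (P (n-1)).eval x)
        = ((-1:ℝ)^n * (-1:ℝ)^(n-1)) * ((P n).eval x * (P (n-1)).eval x) := by ring
      _ = -((P n).eval x * (P (n-1)).eval x) := by rw [hsign]; ring
  -- T1
  have hT1 : freudJ m lam t (derivative (P n * P (n-1))) = (n:ℝ) * h (n-1) := by
    have hz2 : freudJ m lam t (P n * derivative (P (n-1))) = 0 := by
      have hdeg2 : (derivative (P (n-1))).degree < (n : ℕ) := by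
        calc (derivative (P (n-1))).degree
            ≤ ((derivative (P (n-1))).natDegree : WithBot ℕ) := degree_le_natDegree
          _ ≤ ((n-1 : ℕ) : WithBot ℕ) := by
              have h0 := natDegree_derivative_le (P (n-1))
              rw [hdeg (n-1)] at h0
              exact_mod_cast le_trans h0 (by omega : n-1-1 ≤ n-1)
          _ < _ := by exact_mod_cast (by omega : n-1 < n)
      have h0 := horthlow n (derivative (P (n-1))) hdeg2
      rw [show P n * derivative (P (n-1)) = derivative (P (n-1)) * P n by ring]
      exact h0
    have hsd : (derivative (P n) - C (n:ℝ) * P (n-1)).degree < (((n-1:ℕ) : ℕ) : WithBot ℕ) := by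
      rw [degree_lt_iff_coeff_zero]
      intro k hk
      have hk' : n-1 ≤ k := by exact_mod_cast hk
      rw [coeff_sub, coeff_derivative, coeff_C_mul]
      rcases eq_or_lt_of_le hk' with he | hlt
      · rw [← he]
        have h1 : (P n).coeff (n-1+1) = 1 := by
          have h2 := (hmonic n).coeff_natDegree
          rw [hdeg n] at h2
          rw [show n-1+1 = n by omega]
          exact h2
        have h2 : (P (n-1)).coeff (n-1) = 1 := by
          have h3 := (hmonic (n-1)).coeff_natDegree
          rwa [hdeg (n-1)] at h3
        have hc : ((n-1 : ℕ) : ℝ) + 1 = (n : ℝ) := by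
          have h4 : (1:ℕ) ≤ n := hn
          push_cast [h4]
          ring
        rw [h1, h2, hc]
        ring
      · rw [coeff_eq_zero_of_natDegree_lt (by rw [hdeg n]; omega),
          coeff_eq_zero_of_natDegree_lt (by rw [hdeg (n-1)]; omega)]
        simp
    have hsz : freudJ m lam t ((derivative (P n) - C (n:ℝ) * P (n-1)) * P (n-1)) = 0 :=
      horthlow (n-1) _ hsd
    have hd1 : derivative (P n * P (n-1))
        = C (n:ℝ) * (P (n-1) * P (n-1))
          + ((derivative (P n) - C (n:ℝ) * P (n-1)) * P (n-1)
            + P n * derivative (P (n-1))) := by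
      rw [derivative_mul]; ring
    rw [hd1, Jadd, JC, Jadd, hsz, hz2, hhJ (n-1), pow_two]
    ring
  -- T2
  have hT2 : freudJ m lam t (X * (P n * P (n-1))) = β n * h (n-1) := by
    have e1 : (X:ℝ[X]) * (P n * P (n-1))
        = P (n+1) * P (n-1) + C (β n) * (P (n-1) * P (n-1)) := by
      calc (X:ℝ[X]) * (P n * P (n-1)) = (X * P n) * P (n-1) := by ring
        _ = (P (n+1) + C (β n) * P (n-1)) * P (n-1) := by
            rw [show (X:ℝ[X]) * P n = P (n+1) + C (β n) * P (n-1) by rw [hrec n hn]; ring]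
        _ = _ := by ring
    rw [e1, Jadd, JC, horthJ (n+1) (n-1) (by omega), hhJ (n-1), pow_two]
    ring
  -- T3
  have hT3 : freudJ m lam t (X^(2*m-1) * (P n * P (n-1)))
      = h (n-1) * ((1/h (n-2)) * freudJ m lam t (X^(2*m-2) * (P (n-2) * P n))
        + (β n / h n) * freudJ m lam t (X^(2*m-2) * (P n)^2)) := by
    have hbn : h n = β n * h (n-1) := hβh n hn
    rcases eq_or_lt_of_le hn with h1 | h2
    · -- n = 1
      subst h1
      have hQX : P 1 * P (1-1) = (X:ℝ[X]) := by norm_num [hP1, hP0]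
      have hJa : freudJ m lam t (X^(2*m-2) * (P (1-2) * P 1)) = 0 := by
        apply FreudAux.J_odd
        intro x
        simp only [eval_mul, eval_pow, eval_X, show (1:ℕ)-2 = 0 from rfl, hP0, hP1, eval_one]
        rw [Even.neg_pow (⟨m-1, by omega⟩ : Even (2*m-2))]
        ring
      have hLHS : (X:ℝ[X])^(2*m-1) * (P 1 * P (1-1)) = X^(2*m-2) * (P 1)^2 := by
        rw [hQX, hP1]
        rw [show (X:ℝ[X])^(2*m-1) * X = X^(2*m-2) * X^2 by
          rw [← pow_succ, ← pow_add]; congr 1; omega]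
      rw [hLHS, hJa, mul_zero, zero_add]
      have h0ne : h 0 ≠ 0 := (hhpos 0).ne'
      have hβ1ne : β 1 ≠ 0 := (hβpos 1 le_rfl).ne'
      rw [hbn]
      field_simp
    · -- 2 ≤ n
      have hn2 : 2 ≤ n := h2
      have e1 : (X:ℝ[X]) * P (n-1) = P n + C (β (n-1)) * P (n-2) := by
        have h0 := hrec (n-1) (by omega)
        rw [show n-1+1 = n by omega, show n-1-1 = n-2 by omega] at h0
        rw [h0]; ring
      have e2 : (X:ℝ[X])^(2*m-1) * (P n * P (n-1))
          = X^(2*m-2) * (P n)^2 + C (β (n-1)) * (X^(2*m-2) * (P (n-2) * P n)) := by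
        calc (X:ℝ[X])^(2*m-1) * (P n * P (n-1)) = X^(2*m-2) * ((X * P (n-1)) * P n) := by
              rw [show (2*m-1) = (2*m-2)+1 by omega]
              ring
          _ = X^(2*m-2) * ((P n + C (β (n-1)) * P (n-2)) * P n) := by rw [e1]
          _ = _ := by ring
      have hb1 : h (n-1) = β (n-1) * h (n-2) := by
        have h0 := hβh (n-1) (by omega)
        rwa [show n-1-1 = n-2 by omega] at h0
      rw [e2, Jadd, JC]
      have h1p := hhpos (n-1)
      have h2p := hhpos (n-2)
      have hnp := hhpos n
      have hβn := hβpos n hn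
      rw [hbn, hb1]
      have hane : β (n-1) ≠ 0 := (hβpos (n-1) (by omega)).ne'
      have hbne : β n ≠ 0 := hβn.ne'
      have h2ne : h (n-2) ≠ 0 := h2p.ne'
      field_simp
      ring
  -- the string relation
  have hstr := FreudAux.J_string hm hlam t (P n * P (n-1)) (divX (P n * P (n-1)))
    (hXdiv n hn).symm hQodd
  have hexp : freudJ m lam t (derivative (P n * P (n-1)))
      + 2*t * freudJ m lam t (X * (P n * P (n-1)))
      - 2*(m:ℝ) * freudJ m lam t (X^(2*m-1) * (P n * P (n-1)))
      + (2*lam+1) * freudJ m lam t (divX (P n * P (n-1))) = 0 := by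
    rw [Jadd, Jsub, Jadd, JC, JC, JC] at hstr
    linarith
  rw [hT1, hT2, hT3, hI n hn] at hexp
  -- rewrite the statement integrals as J values
  have hI1 : (∫ x : ℝ, x ^ (2*m-2) * ((P (n-2)).eval x * (P n).eval x)
        * freudWeight m lam t x)
      = freudJ m lam t (X^(2*m-2) * (P (n-2) * P n)) := by
    unfold freudJ
    simp [eval_mul, eval_pow]
  have hI2 : (∫ x : ℝ, x ^ (2*m-2) * ((P n).eval x)^2 * freudWeight m lam t x)
      = freudJ m lam t (X^(2*m-2) * (P n)^2) := by
    unfold freudJ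
    simp [eval_mul, eval_pow]
  rw [hI1, hI2]
  have hne := (hhpos (n-1)).ne'
  rcases Nat.even_or_odd n with hev | hod
  · rw [if_neg (by simpa using hev)] at hexp
    rw [hev.neg_one_pow]
    have hfac : h (n-1) * ((n:ℝ) + 2*t*β n
        - 2*(m:ℝ) * ((1/h (n-2)) * freudJ m lam t (X^(2*m-2) * (P (n-2) * P n))
          + (β n / h n) * freudJ m lam t (X^(2*m-2) * (P n)^2))) = 0 := by
      linear_combination hexp
    rcases mul_eq_zero.1 hfac with hc | hc
    · exact absurd hc hne
    · linarith
  · rw [if_pos hod] at hexp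
    rw [hod.neg_one_pow]
    have hfac : h (n-1) * ((n:ℝ) + 2*t*β n + (2*lam+1)
        - 2*(m:ℝ) * ((1/h (n-2)) * freudJ m lam t (X^(2*m-2) * (P (n-2) * P n))
          + (β n / h n) * freudJ m lam t (X^(2*m-2) * (P n)^2))) = 0 := by
      linear_combination hexp
    rcases mul_eq_zero.1 hfac with hc | hc
    · exact absurd hc hne
    · linarith
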